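/- Let M = (m_i)_{i=0}^∞ be a sequence of integers with m_0 = 1 and m_i ≥ 2 for all i ≥ 1. Then for every positive integer n, the number p_M(m_1 m_2 m_3 n − 1) is divisible by m_2 · (m_3 / gcd(m_3, 2)). (This is the case r = 3 of the main theorem, settling the conjecture of Folsom–Homma–Ryu–Tong in this case with σ = 0.) -/

import Mathlib

/-- `pM m n` = number of partitions of `n` into parts of the form `m 0 * m 1 * ⋯ * m r`. -/
noncomputable def pM (m : ℕ → ℕ) (n : ℕ) : ℕ :=
  Nat.card {p : n.Partition // ∀ j ∈ p.parts, ∃ r : ℕ, j = ∏ i ∈ Finset.range (r + 1), m i}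

namespace PMAux

/-- Shift of the base sequence: `shift m = (1, m 2, m 3, …)`. -/
def shift (m : ℕ → ℕ) : ℕ → ℕ := fun i => if i = 0 then 1 else m (i + 1)

/-- `j` is an allowed part for the sequence `m`. -/
def Ok (m : ℕ → ℕ) (j : ℕ) : Prop := ∃ r : ℕ, j = ∏ i ∈ Finset.range (r + 1), m i

lemma pM_def (m : ℕ → ℕ) (n : ℕ) :
    pM m n = Nat.card {p : n.Partition // ∀ j ∈ p.parts, Ok m j} := rfl

lemma shift_zero (m : ℕ → ℕ) : shift m 0 = 1 := rfl

lemma shift_succ (m : ℕ → ℕ) (i : ℕ) (hi : 1 ≤ i) : shift m i = m (i + 1) := by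
  have : i ≠ 0 := by omega
  simp [shift, this]

lemma shift_hyp (m : ℕ → ℕ) (hm : ∀ i, 1 ≤ i → 2 ≤ m i) :
    ∀ i, 1 ≤ i → 2 ≤ shift m i := by
  intro i hi
  rw [shift_succ m i hi]
  exact hm (i + 1) (by omega)

lemma prod_shift (m : ℕ → ℕ) (hm0 : m 0 = 1) (r : ℕ) :
    m 1 * ∏ i ∈ Finset.range (r + 1), shift m i = ∏ i ∈ Finset.range (r + 2), m i := by
  induction r with
  | zero =>
      simp [shift, Finset.prod_range_succ, hm0]
  | succ r ih =>
      rw [Finset.prod_range_succ (f := shift m), ← mul_assoc, ih,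
        shift_succ m (r + 1) (by omega), ← Finset.prod_range_succ]

lemma ok_one (m : ℕ → ℕ) (hm0 : m 0 = 1) : Ok m 1 := ⟨0, by simp [hm0]⟩

lemma ok_mul (m : ℕ → ℕ) (hm0 : m 0 = 1) {j' : ℕ} (h : Ok (shift m) j') :
    Ok m (m 1 * j') := by
  obtain ⟨r, rfl⟩ := h
  exact ⟨r + 1, (prod_shift m hm0 r)⟩

lemma ok_elim (m : ℕ → ℕ) (hm0 : m 0 = 1) {j : ℕ} (hj : Ok m j) (hne : j ≠ 1) :
    ∃ j', Ok (shift m) j' ∧ j = m 1 * j' := by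
  obtain ⟨r, rfl⟩ := hj
  cases r with
  | zero => simp [hm0] at hne
  | succ r => exact ⟨∏ i ∈ Finset.range (r + 1), shift m i, ⟨r, rfl⟩,
      (prod_shift m hm0 r).symm⟩

lemma ok_pos (m : ℕ → ℕ) (hm0 : m 0 = 1) (hm : ∀ i, 1 ≤ i → 2 ≤ m i) {j : ℕ}
    (h : Ok m j) : 0 < j := by
  obtain ⟨r, rfl⟩ := h
  apply Finset.prod_pos
  intro i _
  rcases Nat.eq_zero_or_pos i with rfl | hi
  · omega
  · have := hm i hi; omega

lemma nat_card_sigma {ι : Type} [Fintype ι] (f : ι → Type) [∀ i, Finite (f i)] :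
    Nat.card (Σ i, f i) = ∑ i, Nat.card (f i) := by
  classical
  letI := fun i => Fintype.ofFinite (f i)
  simp only [Nat.card_eq_fintype_card]
  exact Fintype.card_sigma

/-- The key recursion. -/
lemma pM_rec (m : ℕ → ℕ) (hm0 : m 0 = 1) (hm : ∀ i, 1 ≤ i → 2 ≤ m i) (N : ℕ) :
    pM m N = ∑ j ∈ Finset.range (N / m 1 + 1), pM (shift m) j := by
  classical
  have hm1 : 2 ≤ m 1 := hm 1 le_rfl
  have hm1pos : 0 < m 1 := by omega
  -- the gluing map
  set g : (Σ j : Fin (N / m 1 + 1), {q : Nat.Partition (j : ℕ) //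
      ∀ x ∈ q.parts, Ok (shift m) x}) → {p : N.Partition // ∀ x ∈ p.parts, Ok m x} :=
    fun s =>
      ⟨⟨Multiset.map (fun x => m 1 * x) s.2.1.parts +
          Multiset.replicate (N - m 1 * (s.1 : ℕ)) 1, by
        intro x hx
        rcases Multiset.mem_add.mp hx with hx | hx
        · obtain ⟨y, hy, rfl⟩ := Multiset.mem_map.mp hx
          have := s.2.1.parts_pos hy
          positivity
        · rw [Multiset.eq_of_mem_replicate hx]; omega, by
        have hjle : m 1 * (s.1 : ℕ) ≤ N := by
          have h1 : (s.1 : ℕ) ≤ N / m 1 := by omega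
          have h2 : m 1 * (N / m 1) ≤ N := Nat.mul_div_le N (m 1)
          calc m 1 * (s.1 : ℕ) ≤ m 1 * (N / m 1) := by exact Nat.mul_le_mul_left _ h1
            _ ≤ N := h2
        rw [Multiset.sum_add, Multiset.sum_replicate, smul_eq_mul, mul_one]
        have : (Multiset.map (fun x => m 1 * x) s.2.1.parts).sum = m 1 * (s.1 : ℕ) := by
          rw [show (fun x => m 1 * x) = (fun x => m 1 * id x) from rfl,
            Multiset.sum_map_mul_left]
          simp [s.2.1.parts_sum]
        rw [this]
        omega⟩, by
        intro x hx
        rcases Multiset.mem_add.mp hx with hx | hx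
        · obtain ⟨y, hy, rfl⟩ := Multiset.mem_map.mp hx
          exact ok_mul m hm0 (s.2.2 y hy)
        · rw [Multiset.eq_of_mem_replicate hx]
          exact ok_one m hm0⟩
  have hginj : Function.Injective g := by
    rintro ⟨j, q, hq⟩ ⟨j', q', hq'⟩ hgg
    have hparts : Multiset.map (fun x => m 1 * x) q.parts +
        Multiset.replicate (N - m 1 * (j : ℕ)) 1 =
        Multiset.map (fun x => m 1 * x) q'.parts +
        Multiset.replicate (N - m 1 * (j' : ℕ)) 1 := by
      have := congrArg (fun z => z.1.parts) hgg
      simpa [g] using this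
    have hfil : ∀ (s0 : Multiset ℕ) (a : ℕ), (∀ y ∈ s0, 0 < y) →
        Multiset.filter (fun x => x ≠ 1)
          (Multiset.map (fun x => m 1 * x) s0 + Multiset.replicate a 1) =
          Multiset.map (fun x => m 1 * x) s0 := by
      intro s0 a hpos
      rw [Multiset.filter_add, Multiset.filter_eq_self.mpr, Multiset.filter_eq_nil.mpr,
        add_zero]
      · intro x hx
        rw [Multiset.eq_of_mem_replicate hx]; simp
      · intro x hx
        obtain ⟨y, hy, rfl⟩ := Multiset.mem_map.mp hx
        have := hpos y hy
        have : 2 * 1 ≤ m 1 * y := Nat.mul_le_mul hm1 this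
        omega
    have hmapeq : Multiset.map (fun x => m 1 * x) q.parts =
        Multiset.map (fun x => m 1 * x) q'.parts := by
      have := congrArg (Multiset.filter (fun x => x ≠ 1)) hparts
      rwa [hfil _ _ (fun y hy => q.parts_pos hy), hfil _ _ (fun y hy => q'.parts_pos hy)]
        at this
    have hqq : q.parts = q'.parts :=
      Multiset.map_injective (fun a b h => by
        exact Nat.eq_of_mul_eq_mul_left hm1pos h) hmapeq
    have hjj : j = j' := Fin.ext (by
      have h1 : q.parts.sum = (j : ℕ) := q.parts_sum
      have h2 : q'.parts.sum = (j' : ℕ) := q'.parts_sum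
      rw [hqq] at h1
      omega)
    subst hjj
    have hq2 : q = q' := Nat.Partition.ext hqq
    subst hq2
    rfl
  have hgsurj : Function.Surjective g := by
    rintro ⟨p, hp⟩
    set B : Multiset ℕ := Multiset.filter (fun x => x ≠ 1) p.parts with hB
    have hBmem : ∀ x ∈ B, ∃ x', Ok (shift m) x' ∧ x = m 1 * x' := by
      intro x hx
      have hx1 := Multiset.of_mem_filter hx
      exact ok_elim m hm0 (hp x (Multiset.mem_of_mem_filter hx)) hx1
    have hBdvd : ∀ x ∈ B, m 1 * (x / m 1) = x := by
      intro x hx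
      obtain ⟨x', _, rfl⟩ := hBmem x hx
      rw [Nat.mul_div_cancel_left _ hm1pos]
    set j : ℕ := (Multiset.map (fun x => x / m 1) B).sum with hj
    have hmj : m 1 * j = B.sum := by
      rw [hj, ← Multiset.sum_map_mul_left]
      apply congrArg Multiset.sum
      rw [show (fun i => m 1 * ((fun x => x / m 1) i)) = fun x => m 1 * (x / m 1) from rfl]
      calc Multiset.map (fun x => m 1 * (x / m 1)) B = Multiset.map id B :=
            Multiset.map_congr rfl hBdvd
        _ = B := Multiset.map_id B
    have hBle : B.sum ≤ N := by
      have hle : B ≤ p.parts := Multiset.filter_le _ _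
      obtain ⟨u, hu⟩ := Multiset.le_iff_exists_add.mp hle
      have := p.parts_sum
      rw [hu, Multiset.sum_add] at this
      omega
    have hjle : j ≤ N / m 1 := by
      rw [Nat.le_div_iff_mul_le hm1pos, mul_comm]
      omega
    -- the partition q of j
    have hqpos : ∀ x ∈ Multiset.map (fun x => x / m 1) B, 0 < x := by
      intro x hx
      obtain ⟨y, hy, rfl⟩ := Multiset.mem_map.mp hx
      obtain ⟨y', hy', rfl⟩ := hBmem y hy
      rw [Nat.mul_div_cancel_left _ hm1pos]
      exact ok_pos (shift m) (shift_zero m) (shift_hyp m hm) hy'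
    refine ⟨⟨⟨j, hjle.trans_lt (Nat.lt_succ_self _)⟩,
      ⟨⟨Multiset.map (fun x => x / m 1) B, fun hx => hqpos _ hx, rfl⟩, ?_⟩⟩, ?_⟩
    · intro x hx
      obtain ⟨y, hy, rfl⟩ := Multiset.mem_map.mp hx
      obtain ⟨y', hy', rfl⟩ := hBmem y hy
      rwa [Nat.mul_div_cancel_left _ hm1pos]
    · apply Subtype.ext
      apply Nat.Partition.ext
      show Multiset.map (fun x => m 1 * x) (Multiset.map (fun x => x / m 1) B) +
        Multiset.replicate (N - m 1 * j) 1 = p.parts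
      have hmm : Multiset.map (fun x => m 1 * x) (Multiset.map (fun x => x / m 1) B) = B := by
        rw [Multiset.map_map]
        calc Multiset.map ((fun x => m 1 * x) ∘ fun x => x / m 1) B
            = Multiset.map id B := Multiset.map_congr rfl hBdvd
          _ = B := Multiset.map_id B
      rw [hmm]
      have hsplit : B + Multiset.filter (fun x => ¬ x ≠ 1) p.parts = p.parts :=
        Multiset.filter_add_not _ _
      have hfe : Multiset.filter (fun x => ¬ x ≠ 1) p.parts =
          Multiset.replicate (Multiset.count 1 p.parts) 1 := by
        have h1 : Multiset.filter (fun x => ¬ x ≠ 1) p.parts =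
            Multiset.filter (fun x => x = 1) p.parts :=
          Multiset.filter_congr (fun x _ => by simp)
        rw [h1]
        exact Multiset.filter_eq' p.parts 1
      have hcount : N - m 1 * j = Multiset.count 1 p.parts := by
        have := p.parts_sum
        rw [← hsplit, Multiset.sum_add, hfe, Multiset.sum_replicate, smul_eq_mul,
          mul_one] at this
        omega
      rw [hcount, ← hfe, hsplit]
  rw [pM_def]
  rw [Nat.card_congr (Equiv.ofBijective g ⟨hginj, hgsurj⟩).symm]
  rw [nat_card_sigma]
  rw [← Fin.sum_univ_eq_sum_range (fun j => pM (shift m) j) (N / m 1 + 1)]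
  rfl

/-- Splitting a sum over `range (b * K)` into blocks. -/
lemma sum_blocks (b K : ℕ) (G : ℕ → ℕ) :
    ∑ l ∈ Finset.range (b * K), G l =
      ∑ u ∈ Finset.range K, ∑ t ∈ Finset.range b, G (b * u + t) := by
  induction K with
  | zero => simp
  | succ K ih =>
      have hsplit : ∑ l ∈ Finset.range (b * K + b), G l =
          ∑ l ∈ Finset.range (b * K), G l + ∑ l ∈ Finset.Ico (b * K) (b * K + b), G l := by
        rw [Finset.range_eq_Ico, ← Finset.sum_Ico_consecutive G (Nat.zero_le (b * K))
          (Nat.le_add_right (b * K) b), ← Finset.range_eq_Ico]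
      rw [Nat.mul_succ, hsplit, ih, Finset.sum_range_succ]
      congr 1
      rw [Finset.sum_Ico_eq_sum_range]
      simp

lemma sum_div_const (b K : ℕ) (hb : 0 < b) (F : ℕ → ℕ) :
    ∑ j ∈ Finset.range (b * K), F (j / b) = b * ∑ k ∈ Finset.range K, F k := by
  rw [sum_blocks]
  rw [Finset.mul_sum]
  apply Finset.sum_congr rfl
  intro u _
  have : ∀ t ∈ Finset.range b, F ((b * u + t) / b) = F u := by
    intro t ht
    rw [Nat.mul_add_div hb, Nat.div_eq_of_lt (Finset.mem_range.mp ht), add_zero]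
  rw [Finset.sum_congr rfl this, Finset.sum_const, Finset.card_range, smul_eq_mul]

lemma sum_triangle (K : ℕ) (g : ℕ → ℕ) :
    ∑ k ∈ Finset.range K, ∑ l ∈ Finset.range (k + 1), g l =
      ∑ l ∈ Finset.range K, (K - l) * g l := by
  induction K with
  | zero => simp
  | succ K ih =>
      have h1 : K + 1 - K = 1 := by omega
      rw [Finset.sum_range_succ, ih, Finset.sum_range_succ (f := fun l => (K + 1 - l) * g l),
        Finset.sum_range_succ (f := g), h1, one_mul, ← add_assoc,
        ← Finset.sum_add_distrib]
      congr 1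
      apply Finset.sum_congr rfl
      intro l hl
      have hlK : l < K := Finset.mem_range.mp hl
      have : K + 1 - l = (K - l) + 1 := by omega
      rw [this, add_mul, one_mul]

lemma dvd_gauss (b : ℕ) (hb : 2 ≤ b) : b / Nat.gcd b 2 ∣ ∑ t ∈ Finset.range b, t := by
  have h2 : (∑ t ∈ Finset.range b, t) * 2 = b * (b - 1) := Finset.sum_range_id_mul_two b
  rcases Nat.even_or_odd b with ⟨e, he⟩ | hodd
  · have hg : Nat.gcd b 2 = 2 := by
      rw [Nat.gcd_comm]
      exact Nat.gcd_eq_left ⟨e, by omega⟩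
    rw [hg]
    have hb2 : b * (b - 1) = 2 * (e * (b - 1)) := by
      rw [he]; ring
    have hdiv : b / 2 = e := by omega
    rw [hdiv]
    exact ⟨b - 1, by omega⟩
  · have hmod : b % 2 = 1 := Nat.odd_iff.mp hodd
    have hg : Nat.gcd b 2 = 1 := by
      rw [Nat.gcd_comm, Nat.gcd_rec, hmod, Nat.gcd_one_left]
    rw [hg, Nat.div_one]
    rcases hodd with ⟨w, hw⟩
    have hb2 : b * (b - 1) = 2 * (b * w) := by
      have hb1 : b - 1 = 2 * w := by omega
      rw [hb1]; ring
    exact ⟨w, by omega⟩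

lemma dvd_weight (b A : ℕ) (hb : 2 ≤ b) (hAb : b ≤ A) (hdvd : b ∣ A) :
    b / Nat.gcd b 2 ∣ ∑ t ∈ Finset.range b, (A - t) := by
  have hkey : (∑ t ∈ Finset.range b, (A - t)) + ∑ t ∈ Finset.range b, t = b * A := by
    rw [← Finset.sum_add_distrib]
    have : ∀ t ∈ Finset.range b, (A - t) + t = A := by
      intro t ht
      have := Finset.mem_range.mp ht
      omega
    rw [Finset.sum_congr rfl this, Finset.sum_const, Finset.card_range, smul_eq_mul]
  have hd1 : b / Nat.gcd b 2 ∣ b * A :=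
    dvd_mul_of_dvd_left (Nat.div_dvd_of_dvd (Nat.gcd_dvd_left b 2)) A
  have hd2 := dvd_gauss b hb
  have : ∑ t ∈ Finset.range b, (A - t) = b * A - ∑ t ∈ Finset.range b, t := by omega
  rw [this]
  exact Nat.dvd_sub hd1 hd2

end PMAux

open PMAux in
/-- The case `r = 3` of the main theorem: `m₂ · (m₃ / gcd(m₃, 2))` divides
`p_M(m₁ m₂ m₃ n - 1)` for every positive integer `n`. -/
theorem pM_congruence_r_three (m : ℕ → ℕ) (hm0 : m 0 = 1) (hm : ∀ i, 1 ≤ i → 2 ≤ m i)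
    (n : ℕ) (hn : 1 ≤ n) :
    m 2 * (m 3 / Nat.gcd (m 3) 2) ∣ pM m (m 1 * m 2 * m 3 * n - 1) := by
  have hm1 : 2 ≤ m 1 := hm 1 le_rfl
  have hm2 : 2 ≤ m 2 := hm 2 (by omega)
  have hm3 : 2 ≤ m 3 := hm 3 (by omega)
  set m' := shift m with hm'
  set m'' := shift m' with hm''
  set m''' := shift m'' with hm'''
  have hm'0 : m' 0 = 1 := shift_zero m
  have hm'h : ∀ i, 1 ≤ i → 2 ≤ m' i := shift_hyp m hm
  have hm''0 : m'' 0 = 1 := shift_zero m'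
  have hm''h : ∀ i, 1 ≤ i → 2 ≤ m'' i := shift_hyp m' hm'h
  have hm'1 : m' 1 = m 2 := shift_succ m 1 le_rfl
  have hm''1 : m'' 1 = m 3 := by
    rw [hm'', shift_succ m' 1 le_rfl, hm', shift_succ m 2 (by omega)]
  -- Step 1
  have hdiv1 : (m 1 * m 2 * m 3 * n - 1) / m 1 + 1 = m 2 * (m 3 * n) := by
    have hM : 1 ≤ m 2 * (m 3 * n) :=
      Nat.one_le_iff_ne_zero.mpr (by positivity)
    have harr : m 1 * m 2 * m 3 * n = m 1 * (m 2 * (m 3 * n)) := by ring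
    rw [harr]
    have hQ : m 1 * 1 ≤ m 1 * (m 2 * (m 3 * n)) := Nat.mul_le_mul_left _ hM
    rw [mul_one] at hQ
    have : m 1 * (m 2 * (m 3 * n)) - 1 = m 1 * (m 2 * (m 3 * n) - 1) + (m 1 - 1) := by
      have h := Nat.mul_sub (m 1) (m 2 * (m 3 * n)) 1
      rw [mul_one] at h
      omega
    rw [this, Nat.mul_add_div (by omega), Nat.div_eq_of_lt (by omega)]
    omega
  have h1 : pM m (m 1 * m 2 * m 3 * n - 1) =
      ∑ j ∈ Finset.range (m 2 * (m 3 * n)), pM m' j := by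
    rw [pM_rec m hm0 hm, hdiv1]
  -- Step 2: pM m' j = F (j / m 2) with F k = ∑_{l ≤ k} pM m'' l
  set F : ℕ → ℕ := fun k => ∑ l ∈ Finset.range (k + 1), pM m'' l with hF
  have h2 : ∀ j, pM m' j = F (j / m 2) := by
    intro j
    rw [pM_rec m' hm'0 hm'h, hm'1]
  rw [h1, Finset.sum_congr rfl (fun j _ => h2 j),
    sum_div_const (m 2) (m 3 * n) (by omega) F]
  -- now: m 2 * d ∣ m 2 * S with S = ∑_{k < m3 n} F k
  apply mul_dvd_mul_left (m 2)
  -- Step 3: analyze S = ∑_{k < m3 n} F k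
  set R3 : ℕ → ℕ := fun u => ∑ v ∈ Finset.range (u + 1), pM m''' v with hR3
  have h3 : ∀ l, pM m'' l = R3 (l / m 3) := by
    intro l
    rw [pM_rec m'' hm''0 hm''h, hm''1]
  rw [hF, sum_triangle (m 3 * n) (fun l => pM m'' l)]
  rw [Finset.sum_congr rfl (fun l _ => by rw [h3 l])]
  rw [sum_blocks (m 3) n (fun l => (m 3 * n - l) * R3 (l / m 3))]
  apply Finset.dvd_sum
  intro u hu
  have hun : u < n := Finset.mem_range.mp hu
  have hinner : ∀ t ∈ Finset.range (m 3),
      (m 3 * n - (m 3 * u + t)) * R3 ((m 3 * u + t) / m 3) =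
        (m 3 * (n - u) - t) * R3 u := by
    intro t ht
    have htm : t < m 3 := Finset.mem_range.mp ht
    have hdivu : (m 3 * u + t) / m 3 = u := by
      rw [Nat.mul_add_div (by omega), Nat.div_eq_of_lt htm, add_zero]
    have hsub : m 3 * (n - u) = m 3 * n - m 3 * u := Nat.mul_sub (m 3) n u
    have hmu : m 3 * u + m 3 ≤ m 3 * n := by
      have h5 : m 3 * (u + 1) ≤ m 3 * n := Nat.mul_le_mul_left _ (by omega)
      have h6 : m 3 * (u + 1) = m 3 * u + m 3 := Nat.mul_succ (m 3) u
      omega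
    have e1 : m 3 * n - (m 3 * u + t) = m 3 * (n - u) - t := by omega
    rw [hdivu, e1]
  rw [Finset.sum_congr rfl hinner, ← Finset.sum_mul]
  apply Dvd.dvd.mul_right
  apply dvd_weight (m 3) (m 3 * (n - u)) hm3
  · have : m 3 * 1 ≤ m 3 * (n - u) := Nat.mul_le_mul_left _ (by omega)
    omega
  · exact Dvd.intro _ rfl
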